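/- arXiv:1607.05816 — 2 statements merged into one kernel-verified Lean document; each statement's English description precedes it below -/
import Mathlib

section
/- Let n ≥ 1, weights α_k > 0, ε > 0, λ > 0, and s₁,…,s_n > 0. The minimization over (s̃₁,…,s̃_n, h) ∈ ℝ_{>0}^{n+1} of Σ_k α_k ( ε·KL(s̃_k|s_k) + λ·KL(s̃_k|h) ) has optimal h given by h = ( Σ_k α_k s_k^{ε/(ε+λ)} / Σ_k α_k )^{(ε+λ)/ε}. -/
open Finset

/-- Pointwise Kullback-Leibler divergence. -/
noncomputable def klPt (a b : ℝ) : ℝ := a * Real.log (a / b) - a + b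

lemma klPt_nonneg {a b : ℝ} (ha : 0 < a) (hb : 0 < b) : 0 ≤ klPt a b := by
  have h := Real.log_le_sub_one_of_pos (div_pos hb ha)
  have hlog : Real.log (a / b) = - Real.log (b / a) := by
    rw [← Real.log_inv]; congr 1; field_simp
  have h2 : a * Real.log (b / a) ≤ a * (b / a - 1) :=
    mul_le_mul_of_nonneg_left h ha.le
  have : a * (b / a - 1) = b - a := by field_simp
  unfold klPt
  rw [hlog]
  nlinarith

lemma klPt_self {a : ℝ} (ha : a ≠ 0) : klPt a a = 0 := by
  simp [klPt, div_self ha]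

lemma kl_identity (ε lam a b t : ℝ) (hε : 0 < ε) (hlam : 0 < lam)
    (ha : 0 < a) (hb : 0 < b) (ht : 0 < t) :
    ε * klPt t a + lam * klPt t b =
      (ε + lam) * klPt t (a ^ (ε/(ε+lam)) * b ^ (lam/(ε+lam)))
        + (ε * a + lam * b - (ε+lam) * (a ^ (ε/(ε+lam)) * b ^ (lam/(ε+lam)))) := by
  have hel : 0 < ε + lam := by linarith
  set u : ℝ := a ^ (ε/(ε+lam)) * b ^ (lam/(ε+lam)) with hu
  have hu0 : 0 < u := mul_pos (Real.rpow_pos_of_pos ha _) (Real.rpow_pos_of_pos hb _)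
  have hlu : Real.log u = (ε/(ε+lam)) * Real.log a + (lam/(ε+lam)) * Real.log b := by
    rw [hu, Real.log_mul (by positivity) (by positivity), Real.log_rpow ha, Real.log_rpow hb]
  unfold klPt
  rw [Real.log_div ht.ne' ha.ne', Real.log_div ht.ne' hb.ne', Real.log_div ht.ne' hu0.ne', hlu]
  field_simp
  ring


/-- In the pointwise KL-barycenter subproblem
`min Σ_k α_k (ε·KL(s̃_k|s_k) + λ·KL(s̃_k|h))`, the optimal `h` is
`(Σ α_k s_k^{ε/(ε+λ)} / Σ α_k)^{(ε+λ)/ε}`: some `s̃*` together with this `h`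
achieves the minimum over all positive `(s̃, h)`. -/
theorem kl_barycenter_optimal_h (n : ℕ) (hn : 1 ≤ n)
    (α s : Fin n → ℝ) (hα : ∀ k, 0 < α k) (hs : ∀ k, 0 < s k)
    (ε lam : ℝ) (hε : 0 < ε) (hlam : 0 < lam) :
    let hstar : ℝ :=
      ((∑ k, α k * s k ^ (ε / (ε + lam))) / (∑ k, α k)) ^ ((ε + lam) / ε)
    ∃ tstar : Fin n → ℝ, (∀ k, 0 < tstar k) ∧ 0 < hstar ∧
      ∀ (t : Fin n → ℝ) (h : ℝ), (∀ k, 0 < t k) → 0 < h →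
        ∑ k, α k * (ε * klPt (tstar k) (s k) + lam * klPt (tstar k) hstar) ≤
          ∑ k, α k * (ε * klPt (t k) (s k) + lam * klPt (t k) h) := by
  intro hstar
  have hel : 0 < ε + lam := by linarith
  set θ : ℝ := ε / (ε + lam) with hθ
  set c : ℝ := lam / (ε + lam) with hc
  have hθ0 : 0 < θ := by positivity
  have hc0 : 0 < c := by positivity
  have hθc : θ + c = 1 := by rw [hθ, hc, ← add_div, div_self hel.ne']
  have hne : (univ : Finset (Fin n)).Nonempty := by
    have : 0 < n := hn
    exact univ_nonempty_iff.mpr (Fin.pos_iff_nonempty.mp this)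
  set A : ℝ := ∑ k, α k with hA
  set B : ℝ := ∑ k, α k * s k ^ θ with hB
  have hA0 : 0 < A := Finset.sum_pos (fun k _ => hα k) hne
  have hB0 : 0 < B := Finset.sum_pos (fun k _ => mul_pos (hα k) (Real.rpow_pos_of_pos (hs k) _)) hne
  have hBA : 0 < B / A := div_pos hB0 hA0
  have hstar_pos : 0 < hstar := Real.rpow_pos_of_pos hBA _
  have hstar_def : hstar = (B / A) ^ ((ε + lam) / ε) := rfl
  -- hstar ^ θ = B / A
  have hpow : hstar ^ θ = B / A := by
    rw [hstar_def, ← Real.rpow_mul hBA.le]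
    have h1 : (ε + lam) / ε * θ = 1 := by rw [hθ]; field_simp
    rw [h1, Real.rpow_one]
  have hpowc : B * hstar ^ c = A * hstar := by
    have h2 : hstar ^ c * hstar ^ θ = hstar := by
      rw [← Real.rpow_add hstar_pos, hc, hθ]
      have : lam / (ε + lam) + ε / (ε + lam) = 1 := by
        rw [← add_div, add_comm, div_self hel.ne']
      rw [this, Real.rpow_one]
    have h3 : hstar ^ c * (B / A) = hstar := by rw [← hpow]; exact h2
    field_simp at h3
    linarith [h3]
  refine ⟨fun k => s k ^ θ * hstar ^ c,
    fun k => mul_pos (Real.rpow_pos_of_pos (hs k) _) (Real.rpow_pos_of_pos hstar_pos _),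
    hstar_pos, ?_⟩
  intro t h ht hh
  have key : ∀ (x h' : ℝ), 0 < x → 0 < h' → ∀ k : Fin n,
      ε * klPt x (s k) + lam * klPt x h' =
        (ε + lam) * klPt x (s k ^ θ * h' ^ c)
          + (ε * s k + lam * h' - (ε + lam) * (s k ^ θ * h' ^ c)) := by
    intro x h' hx hh' k
    have := kl_identity ε lam (s k) h' x hε hlam (hs k) hh' hx
    rw [← hθ, ← hc] at this
    exact this
  -- value of the "partially minimized" objective
  have hLval : ∀ h' : ℝ,
      (∑ k, α k * (ε * s k + lam * h' - (ε + lam) * (s k ^ θ * h' ^ c)))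
        = ε * (∑ k, α k * s k) + lam * h' * A - (ε + lam) * h' ^ c * B := by
    intro h'
    rw [hA, hB, Finset.mul_sum, Finset.mul_sum, Finset.mul_sum,
      ← Finset.sum_add_distrib, ← Finset.sum_sub_distrib]
    exact Finset.sum_congr rfl fun k _ => by ring
  -- LHS equals value at hstar
  have hL : ∑ k, α k * (ε * klPt (s k ^ θ * hstar ^ c) (s k)
        + lam * klPt (s k ^ θ * hstar ^ c) hstar)
      = ε * (∑ k, α k * s k) + lam * hstar * A - (ε + lam) * hstar ^ c * B := by
    rw [← hLval hstar]
    refine Finset.sum_congr rfl fun k _ => ?_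
    have hu : (0:ℝ) < s k ^ θ * hstar ^ c :=
      mul_pos (Real.rpow_pos_of_pos (hs k) _) (Real.rpow_pos_of_pos hstar_pos _)
    rw [key _ _ hu hstar_pos k, klPt_self hu.ne']
    ring
  -- RHS is at least value at h
  have hR : ε * (∑ k, α k * s k) + lam * h * A - (ε + lam) * h ^ c * B
      ≤ ∑ k, α k * (ε * klPt (t k) (s k) + lam * klPt (t k) h) := by
    rw [← hLval h]
    refine Finset.sum_le_sum fun k _ => ?_
    have hu : (0:ℝ) < s k ^ θ * h ^ c :=
      mul_pos (Real.rpow_pos_of_pos (hs k) _) (Real.rpow_pos_of_pos hh _)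
    rw [key _ _ (ht k) hh k]
    have := klPt_nonneg (ht k) hu
    nlinarith [hα k, mul_nonneg (hα k).le (mul_nonneg hel.le this)]
  -- comparison of the two values via AM-GM
  have hamgm : h ^ c * hstar ^ θ ≤ c * h + θ * hstar :=
    Real.geom_mean_le_arith_mean2_weighted hc0.le hθ0.le hh.le hstar_pos.le
      (by linarith [hθc])
  have hBh : B * h ^ c ≤ c * h * A + θ * hstar * A := by
    rw [hpow] at hamgm
    have := mul_le_mul_of_nonneg_right hamgm hA0.le
    calc B * h ^ c = h ^ c * (B / A) * A := by field_simp
      _ ≤ (c * h + θ * hstar) * A := this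
      _ = c * h * A + θ * hstar * A := by ring
  have hcmp : lam * hstar * A - (ε + lam) * hstar ^ c * B
      ≤ lam * h * A - (ε + lam) * h ^ c * B := by
    have h4 : (ε + lam) * c = lam := by rw [hc]; field_simp
    have h5 : (ε + lam) * θ = ε := by rw [hθ]; field_simp
    have h6 : (ε + lam) * hstar ^ c * B = (ε + lam) * (A * hstar) := by
      rw [mul_assoc, mul_comm (hstar ^ c) B, hpowc]
    have h7 : (ε + lam) * h ^ c * B ≤ lam * h * A + ε * hstar * A := by
      calc (ε + lam) * h ^ c * B = (ε + lam) * (B * h ^ c) := by ring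
        _ ≤ (ε + lam) * (c * h * A + θ * hstar * A) :=
            mul_le_mul_of_nonneg_left hBh hel.le
        _ = ((ε + lam) * c) * (h * A) + ((ε + lam) * θ) * (hstar * A) := by ring
        _ = lam * h * A + ε * hstar * A := by rw [h4, h5]; ring
    have h8 : lam * hstar * A - (ε + lam) * (A * hstar) = -(ε * hstar * A) := by ring
    rw [h6, h8]
    linarith [h7]
  rw [hL]
  linarith
end

section
/- Let φ be an entropy function, ε > 0, and let s > 0, p > 0 be reals. A real s* > 0 minimizes the function t ↦ ε·KL(t|s) + p·φ(t/p) over t ≥ 0 if and only if 0 ∈ ε log(s*/s) + ∂φ(s*/p); and if p = 0 with φ'_∞ < ∞, the minimizer is s* = s·e^{−φ'_∞/ε}. -/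
open Filter

lemma klPt_nonneg_s18 {t c : ℝ} (ht : 0 ≤ t) (hc : 0 < c) : 0 ≤ klPt t c := by
  rcases eq_or_lt_of_le ht with h | h
  · simp [klPt, ← h, hc.le]
  · have hlog : Real.log (c / t) ≤ c / t - 1 :=
      Real.log_le_sub_one_of_pos (by positivity)
    have hneg : Real.log (t / c) = - Real.log (c / t) := by
      rw [← Real.log_inv]; congr 1; field_simp
    have h2 : t * (c / t - 1) = c - t := by field_simp
    have h3 := mul_le_mul_of_nonneg_left hlog h.le
    unfold klPt
    rw [hneg]
    nlinarith

lemma klPt_identity {t s sstar : ℝ} (ht : 0 ≤ t) (hs : 0 < s) (hst : 0 < sstar) :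
    klPt t s - klPt sstar s - Real.log (sstar / s) * (t - sstar) = klPt t sstar := by
  rcases eq_or_lt_of_le ht with h | h
  · simp [klPt, ← h]
    ring
  · unfold klPt
    rw [Real.log_div h.ne' hs.ne', Real.log_div hst.ne' hs.ne', Real.log_div h.ne' hst.ne']
    ring

lemma klPt_hasDerivAt {s a : ℝ} (hs : 0 < s) (ha : 0 < a) :
    HasDerivAt (fun t => klPt t s) (Real.log (a / s)) a := by
  have h1 : HasDerivAt (fun t : ℝ => t * (Real.log t - Real.log s) - t + s)
      ((Real.log a - Real.log s) + a * a⁻¹ - 1) a := by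
    have hlog : HasDerivAt Real.log a⁻¹ a := Real.hasDerivAt_log ha.ne'
    have := (((hasDerivAt_id a).mul (hlog.sub_const (Real.log s))).sub (hasDerivAt_id a)).add_const s
    simpa using this
  have heq : (fun t => klPt t s) =ᶠ[nhds a] (fun t : ℝ => t * (Real.log t - Real.log s) - t + s) := by
    filter_upwards [eventually_gt_nhds ha] with t ht
    unfold klPt
    rw [Real.log_div ht.ne' hs.ne']
  have h2 := h1.congr_of_eventuallyEq heq
  refine h2.congr_deriv ?_
  rw [Real.log_div ha.ne' hs.ne', mul_inv_cancel₀ ha.ne']; ring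

/-- Pointwise optimality condition for the KL-proximal operator of a `φ`-divergence:
for `p > 0`, `s* > 0` minimizes `t ↦ ε·KL(t|s) + p·φ(t/p)` iff
`0 ∈ ε log(s*/s) + ∂φ(s*/p)`; and for `p = 0` with finite recession slope `φ'_∞`,
the minimizer of `t ↦ ε·KL(t|s) + t·φ'_∞` is `s·e^{−φ'_∞/ε}`. -/
theorem kl_prox_optimality (φ : ℝ → ℝ) (hφ : ConvexOn ℝ (Set.Ici 0) φ)
    (ε s : ℝ) (hε : 0 < ε) (hs : 0 < s) :
    (∀ p : ℝ, 0 < p → ∀ sstar : ℝ, 0 < sstar →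
      (IsMinOn (fun t => ε * klPt t s + p * φ (t / p)) (Set.Ici 0) sstar ↔
        ∃ g : ℝ, (∀ y ∈ Set.Ici (0 : ℝ),
            φ (sstar / p) + g * (y - sstar / p) ≤ φ y) ∧
          ε * Real.log (sstar / s) + g = 0)) ∧
    (∀ φinf : ℝ, Tendsto (fun x : ℝ => φ x / x) atTop (nhds φinf) →
      IsMinOn (fun t => ε * klPt t s + t * φinf) (Set.Ici 0)
        (s * Real.exp (-φinf / ε))) := by
  constructor
  · intro p hp sstar hst
    constructor
    · -- minimality ⇒ subgradient
      intro hmin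
      refine ⟨-(ε * Real.log (sstar / s)), ?_, by ring⟩
      intro y hy
      set g : ℝ := -(ε * Real.log (sstar / s)) with hg
      set d : ℝ := p * y - sstar with hd
      -- the difference quotient function
      have hderiv : HasDerivAt (fun l : ℝ => klPt (sstar + l * d) s)
          (Real.log (sstar / s) * d) 0 := by
        have hinner : HasDerivAt (fun l : ℝ => sstar + l * d) d 0 := by
          simpa using ((hasDerivAt_id (0:ℝ)).mul_const d).const_add sstar
        have houter : HasDerivAt (fun t => klPt t s) (Real.log (sstar / s)) (sstar + 0 * d) := by
          simpa using klPt_hasDerivAt hs hst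
        exact houter.comp 0 hinner
      have hslope := hasDerivAt_iff_tendsto_slope.mp hderiv
      have htend : Tendsto (fun l : ℝ => ε * (klPt sstar s - klPt (sstar + l * d) s) / l)
          (nhdsWithin 0 (Set.Ioi 0)) (nhds (-(ε * (Real.log (sstar / s) * d)))) := by
        have h1 : Tendsto (fun l : ℝ => -ε * slope (fun l : ℝ => klPt (sstar + l * d) s) 0 l)
            (nhdsWithin 0 {(0:ℝ)}ᶜ) (nhds (-ε * (Real.log (sstar / s) * d))) :=
          hslope.const_mul (-ε)
        have h2 := h1.mono_left (nhdsWithin_mono 0 (show Set.Ioi (0:ℝ) ⊆ {(0:ℝ)}ᶜ from fun x hx => Set.mem_compl_singleton_iff.mpr (ne_of_gt hx)))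
        refine Tendsto.congr ?_ (by simpa only [neg_mul] using h2)
        intro l
        simp only [slope_def_field, sub_zero, zero_mul, add_zero]
        ring
      have hbound : ∀ᶠ l in nhdsWithin 0 (Set.Ioi 0),
          ε * (klPt sstar s - klPt (sstar + l * d) s) / l ≤ p * (φ y - φ (sstar / p)) := by
        filter_upwards [Ioo_mem_nhdsGT_of_mem
          (Set.mem_Ico.mpr ⟨le_refl (0:ℝ), one_pos⟩)] with l hl
        obtain ⟨hl0, hl1⟩ := hl
        have hy' : 0 ≤ y := hy
        have htl0 : 0 ≤ sstar + l * d := by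
          have : sstar + l * d = (1 - l) * sstar + l * (p * y) := by rw [hd]; ring
          rw [this]
          have h1 : 0 ≤ (1 - l) * sstar := mul_nonneg (by linarith) hst.le
          have h2 : 0 ≤ l * (p * y) := mul_nonneg hl0.le (mul_nonneg hp.le hy')
          linarith
        have hconv := hφ.2 (Set.mem_Ici.mpr (div_nonneg hst.le hp.le)) hy
          (by linarith : (0:ℝ) ≤ 1 - l) hl0.le (by ring)
        simp only [smul_eq_mul] at hconv
        have harg : (1 - l) * (sstar / p) + l * y = (sstar + l * d) / p := by
          rw [hd]; field_simp; ring
        rw [harg] at hconv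
        have hminle := isMinOn_iff.mp hmin (sstar + l * d) (Set.mem_Ici.mpr htl0)
        rw [div_le_iff₀ hl0]
        nlinarith [hminle, hconv]
      have hlim := le_of_tendsto htend hbound
      have hps : p * (sstar / p) = sstar := by field_simp
      have heq : p * (g * (y - sstar / p)) = -(ε * (Real.log (sstar / s) * d)) := by
        rw [hg, hd]; field_simp
      have hkey : p * (g * (y - sstar / p)) ≤ p * (φ y - φ (sstar / p)) := by
        rw [heq]; exact hlim
      have := le_of_mul_le_mul_left hkey hp
      linarith
    · -- subgradient ⇒ minimality
      rintro ⟨g, hsub, hg⟩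
      rw [isMinOn_iff]
      intro t ht
      simp only [Set.mem_Ici] at ht
      have hid := klPt_identity ht hs hst
      have hnn := klPt_nonneg_s18 ht hst
      have hsubt := hsub (t / p) (Set.mem_Ici.mpr (div_nonneg ht hp.le))
      have hpt : p * (t / p) = t := by field_simp
      have hps : p * (sstar / p) = sstar := by field_simp
      have hgval : g = -(ε * Real.log (sstar / s)) := by linarith
      have hlin : p * (g * (t / p - sstar / p)) = g * (t - sstar) := by
        field_simp
      have h1 := mul_le_mul_of_nonneg_left hsubt hp.le
      have h2 : ε * (klPt t s - klPt sstar s - Real.log (sstar / s) * (t - sstar))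
          = ε * klPt t sstar := by rw [hid]
      nlinarith [mul_nonneg hε.le hnn]
  · intro φinf _
    rw [isMinOn_iff]
    intro t ht
    simp only [Set.mem_Ici] at ht
    set m : ℝ := s * Real.exp (-φinf / ε) with hm
    have hmpos : 0 < m := by positivity
    have hid := klPt_identity ht hs hmpos
    have hnn := klPt_nonneg_s18 ht hmpos
    have hlogm : Real.log (m / s) = -φinf / ε := by
      rw [hm, mul_comm, mul_div_assoc, div_self hs.ne', mul_one, Real.log_exp]
    rw [hlogm] at hid
    have hεe : ε * (-φinf / ε) = -φinf := by field_simp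
    nlinarith
end
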